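/- Let (δ_j) be a monotone decreasing sequence of positive reals, ρ > 0, and suppose that for all sufficiently large j, δ_{2j} · ∏_{n=2}^{2j−1} δ_n² ≤ (C/j)^{4j/ρ} for some constant C > 0. Then δ_{2j} = O(j^{−1/ρ}) as j → ∞. -/

import Mathlib

/-- If `(δ_j)_{j≥2}` is a decreasing sequence of positive reals, `ρ, C > 0`, and for all
large `j` one has `δ_{2j} ∏_{n=2}^{2j−1} δ_n² ≤ (C/j)^{4j/ρ}`, then
`δ_{2j} = O(j^{−1/ρ})` as `j → ∞`. -/
theorem delta_two_j_bigO (δ : ℕ → ℝ) (hpos : ∀ j, 2 ≤ j → 0 < δ j)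
    (hmono : ∀ j k, 2 ≤ j → j ≤ k → δ k ≤ δ j)
    (ρ C : ℝ) (hρ : 0 < ρ) (hC : 0 < C)
    (hbound : ∃ J : ℕ, ∀ j : ℕ, J ≤ j →
      δ (2 * j) * ∏ n ∈ Finset.Icc 2 (2 * j - 1), (δ n) ^ 2
        ≤ (C / (j : ℝ)) ^ ((4 * (j : ℝ)) / ρ)) :
    ∃ K : ℝ, 0 < K ∧ ∃ N : ℕ, ∀ j : ℕ, N ≤ j →
      δ (2 * j) ≤ K * (j : ℝ) ^ (-(1 / ρ)) := by
  obtain ⟨J, hJ⟩ := hbound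
  refine ⟨C ^ (1/ρ), Real.rpow_pos_of_pos hC _, max J (⌈C⌉₊ + 1), ?_⟩
  intro j hj
  have hjJ : J ≤ j := le_trans (le_max_left _ _) hj
  have hjC : C < (j : ℝ) := by
    have h1 : ⌈C⌉₊ + 1 ≤ j := le_trans (le_max_right _ _) hj
    calc C ≤ (⌈C⌉₊ : ℝ) := Nat.le_ceil C
    _ < (j : ℝ) := by exact_mod_cast h1
  have hj1 : 1 ≤ j := by
    have : ⌈C⌉₊ + 1 ≤ j := le_trans (le_max_right _ _) hj
    omega
  have hj0 : (0 : ℝ) < j := by positivity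
  have hb0 : (0 : ℝ) < C / j := div_pos hC hj0
  have hb1 : C / (j : ℝ) ≤ 1 := by
    rw [div_le_one hj0]; exact hjC.le
  have hδpos : 0 < δ (2 * j) := hpos _ (by omega)
  -- main inequality: δ (2j) ≤ (C/j) ^ (1/ρ)
  have key : δ (2 * j) ≤ (C / j) ^ (1 / ρ) := by
    by_contra h
    push_neg at h
    set m : ℕ := 4 * j - 3 with hm
    have hr0 : (0 : ℝ) ≤ (C / j) ^ (1 / ρ) := (Real.rpow_pos_of_pos hb0 _).le
    have h1 : ((C / j) ^ (1 / ρ)) ^ m < δ (2 * j) ^ m :=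
      pow_lt_pow_left₀ h hr0 (by omega)
    have h2 : δ (2 * j) ^ m ≤ δ (2 * j) * ∏ n ∈ Finset.Icc 2 (2 * j - 1), (δ n) ^ 2 := by
      have hprod : (δ (2 * j) ^ 2) ^ (2 * j - 2)
          ≤ ∏ n ∈ Finset.Icc 2 (2 * j - 1), (δ n) ^ 2 := by
        have := Finset.prod_le_prod (s := Finset.Icc 2 (2 * j - 1))
          (f := fun _ => δ (2 * j) ^ 2) (g := fun n => δ n ^ 2)
          (fun i _ => by positivity)
          (fun i hi => by
            simp only [Finset.mem_Icc] at hi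
            have h2i : 2 ≤ i := hi.1
            have : δ (2 * j) ≤ δ i := hmono i (2 * j) h2i (by omega)
            exact pow_le_pow_left₀ hδpos.le this 2)
        simpa [Nat.card_Icc, show 2 * j - 1 + 1 - 2 = 2 * j - 2 by omega] using this
      calc δ (2 * j) ^ m = δ (2 * j) * (δ (2 * j) ^ 2) ^ (2 * j - 2) := by
            rw [← pow_mul, ← pow_succ']
            congr 1
            omega
      _ ≤ _ := by
            exact mul_le_mul_of_nonneg_left hprod hδpos.le
    have h3 := hJ j hjJ
    have hmle : (m : ℝ) ≤ 4 * (j : ℝ) := by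
      have hcast : ((m : ℝ)) = 4 * (j : ℝ) - 3 := by
        rw [hm]; push_cast [Nat.cast_sub (by omega : 3 ≤ 4 * j)]; ring
      linarith
    have h4 : (C / (j:ℝ)) ^ ((4 * (j : ℝ)) / ρ) ≤ (C / (j:ℝ)) ^ ((m : ℝ) / ρ) := by
      apply Real.rpow_le_rpow_of_exponent_ge hb0 hb1
      gcongr
    have h5 : ((C / j) ^ (1 / ρ)) ^ m = (C / (j:ℝ)) ^ ((m : ℝ) / ρ) := by
      rw [← Real.rpow_natCast ((C / (j:ℝ)) ^ (1/ρ)) m, ← Real.rpow_mul hb0.le]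
      congr 1
      field_simp
    rw [h5] at h1
    linarith
  calc δ (2 * j) ≤ (C / j) ^ (1 / ρ) := key
  _ = C ^ (1/ρ) * (j : ℝ) ^ (-(1 / ρ)) := by
      rw [Real.div_rpow hC.le hj0.le, Real.rpow_neg hj0.le, div_eq_mul_inv]
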